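/- arXiv:1907.10832 — 2 statements merged into one kernel-verified Lean document; each statement's English description precedes it below -/
import Mathlib

section
/- Let (V₁,V₂,V) be a tetrablock isometry on a complex Hilbert space K, i.e. a triple of pairwise commuting bounded operators with V an isometry, ‖V₂‖ ≤ 1, and V₁ = V₂*V. Then there exist a complex Hilbert space K̃, an isometric linear embedding ι : K → K̃, and pairwise commuting normal operators U₁, U₂, U on K̃ with U unitary, ‖U₂‖ ≤ 1, and U₁ = U₂*U, such that U₁ ι = ι V₁, U₂ ι = ι V₂, and U ι = ι V (i.e. (U₁,U₂,U) is a tetrablock unitary extending (V₁,V₂,V)). -/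
/- Common definitions: the tetrablock, tetrablock contractions, defect operators and
defect spaces, fundamental operators, tetrablock isometries and tetrablock-isometric lifts. -/

noncomputable section

open ContinuousLinearMap

universe u

/-- The tetrablock domain `𝔼 ⊆ ℂ³`: points `(x₁,x₂,x₃)` of the form
`(a₁₁, a₂₂, det A)` for some `2×2` complex matrix `A` of operator norm `< 1`. -/
def tetrablock : Set (Fin 3 → ℂ) :=
  {x | ∃ A : Matrix (Fin 2) (Fin 2) ℂ,
    ‖Matrix.toEuclideanCLM (𝕜 := ℂ) A‖ < 1 ∧ x 0 = A 0 0 ∧ x 1 = A 1 1 ∧ x 2 = A.det}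

variable {H : Type u} [NormedAddCommGroup H] [InnerProductSpace ℂ H] [CompleteSpace H]

/-- Evaluation `p(T₁,T₂,T)` of a three-variable polynomial at a (commuting) operator
triple: substitute `T₁,T₂,T` monomial-wise (order is immaterial for commuting triples). -/
def polyEval (T₁ T₂ T : H →L[ℂ] H) (p : MvPolynomial (Fin 3) ℂ) : H →L[ℂ] H :=
  p.support.sum fun m => p.coeff m • (T₁ ^ m 0 * T₂ ^ m 1 * T ^ m 2)

/-- A tetrablock contraction: a commuting triple for which the closed tetrablock is a
spectral set. -/
def IsTetrablockContraction (T₁ T₂ T : H →L[ℂ] H) : Prop :=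
  Commute T₁ T₂ ∧ Commute T₁ T ∧ Commute T₂ T ∧
  ∀ p : MvPolynomial (Fin 3) ℂ,
    ‖polyEval T₁ T₂ T p‖ ≤
      sSup {y : ℝ | ∃ x ∈ closure tetrablock, y = ‖MvPolynomial.eval x p‖}

/-- The defect operator `D_T = (I - T*T)^{1/2}` of a contraction `T`. -/
def defect (T : H →L[ℂ] H) : H →L[ℂ] H := CFC.sqrt (1 - adjoint T * T)

/-- The defect space `𝒟_T`, the closure of the range of `D_T`. -/
def defectSpace (T : H →L[ℂ] H) : Submodule ℂ H :=
  (LinearMap.range (defect T : H →ₗ[ℂ] H)).topologicalClosure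

lemma defect_mem (T : H →L[ℂ] H) (h : H) : defect T h ∈ defectSpace T :=
  Submodule.le_topologicalClosure _ ⟨h, rfl⟩

/-- The defect operator `D_T`, viewed as a map from `H` into the defect space `𝒟_T`. -/
def defectTo (T : H →L[ℂ] H) : H →L[ℂ] defectSpace T :=
  (defect T).codRestrict _ (defect_mem T)

instance (T : H →L[ℂ] H) : CompleteSpace (defectSpace T) :=
  IsClosed.completeSpace_coe (hs := Submodule.isClosed_topologicalClosure _)

/-- `F₁, F₂` are fundamental operators for `(T₁,T₂,T)`:
`T₁ - T₂* T = D_T F₁ D_T` and `T₂ - T₁* T = D_T F₂ D_T`. -/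
def AreFundamentalOps (T₁ T₂ T : H →L[ℂ] H)
    (F₁ F₂ : defectSpace T →L[ℂ] defectSpace T) : Prop :=
  T₁ - adjoint T₂ * T = (defectSpace T).subtypeL ∘L F₁ ∘L defectTo T ∧
  T₂ - adjoint T₁ * T = (defectSpace T).subtypeL ∘L F₂ ∘L defectTo T

/-- A tetrablock isometry: a commuting triple `(V₁,V₂,V)` with `V` an isometry,
`‖V₂‖ ≤ 1` and `V₁ = V₂* V`. -/
def IsTetrablockIsometry {K : Type u} [NormedAddCommGroup K] [InnerProductSpace ℂ K]
    [CompleteSpace K] (V₁ V₂ V : K →L[ℂ] K) : Prop :=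
  Commute V₁ V₂ ∧ Commute V₁ V ∧ Commute V₂ V ∧
    adjoint V * V = 1 ∧ ‖V₂‖ ≤ 1 ∧ V₁ = adjoint V₂ * V

/-- `(T₁,T₂,T)` has a tetrablock-isometric lift: a tetrablock isometry `(V₁,V₂,V)` on a
space `K ⊇ H` whose adjoints extend the adjoints of `T₁,T₂,T`. -/
def HasTetrablockIsometricLift (T₁ T₂ T : H →L[ℂ] H) : Prop :=
  ∃ (K : Type u) (_ : NormedAddCommGroup K) (_ : InnerProductSpace ℂ K) (_ : CompleteSpace K)
    (ι : H →ₗᵢ[ℂ] K) (V₁ V₂ V : K →L[ℂ] K),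
      IsTetrablockIsometry V₁ V₂ V ∧
      (∀ h : H, adjoint V₁ (ι h) = ι (adjoint T₁ h)) ∧
      (∀ h : H, adjoint V₂ (ι h) = ι (adjoint T₂ h)) ∧
      (∀ h : H, adjoint V (ι h) = ι (adjoint T h))

open Filter Topology
open scoped ComplexInnerProductSpace

namespace TetraAux

variable {K : Type u} [NormedAddCommGroup K] [InnerProductSpace ℂ K] [CompleteSpace K]

/-- An isometry bundled with its defining property. -/
structure IsomOp (K : Type u) [NormedAddCommGroup K] [InnerProductSpace ℂ K]
    [CompleteSpace K] : Type u where
  V : K →L[ℂ] K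
  isom : adjoint V * V = 1

namespace IsomOp

variable (W : IsomOp K)

lemma adj_apply (x : K) : adjoint W.V (W.V x) = x := by
  have := ContinuousLinearMap.ext_iff.mp W.isom x
  simpa [mul_apply] using this

lemma inner_map (x y : K) : ⟪W.V x, W.V y⟫ = ⟪x, y⟫ := by
  rw [← adjoint_inner_left, adj_apply]

lemma norm_map (x : K) : ‖W.V x‖ = ‖x‖ := by
  rw [@norm_eq_sqrt_re_inner ℂ _ _ _ _ (W.V x), W.inner_map, ← @norm_eq_sqrt_re_inner ℂ]

lemma norm_V_le : ‖W.V‖ ≤ 1 :=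
  opNorm_le_bound _ zero_le_one fun x => by rw [W.norm_map, one_mul]

lemma norm_adj_le : ‖adjoint W.V‖ ≤ 1 := by
  rw [← star_eq_adjoint, norm_star]; exact W.norm_V_le

lemma norm_adj_apply_le (x : K) : ‖adjoint W.V x‖ ≤ ‖x‖ := by
  calc ‖adjoint W.V x‖ ≤ ‖adjoint W.V‖ * ‖x‖ := le_opNorm _ _
    _ ≤ 1 * ‖x‖ := by gcongr; exact W.norm_adj_le
    _ = ‖x‖ := one_mul _

lemma adjoint_pow (p : ℕ) : adjoint (W.V ^ p) = (adjoint W.V) ^ p := by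
  rw [← star_eq_adjoint, ← star_eq_adjoint, star_pow]

lemma pow_adj_apply (p : ℕ) (x : K) : ((adjoint W.V) ^ p) ((W.V ^ p) x) = x := by
  induction p with
  | zero => simp
  | succ n ih =>
    rw [pow_succ (adjoint W.V), pow_succ' W.V, mul_apply_eq_comp, mul_apply_eq_comp, adj_apply, ih]

lemma inner_map_pow (p : ℕ) (x y : K) : ⟪(W.V ^ p) x, (W.V ^ p) y⟫ = ⟪x, y⟫ := by
  rw [← adjoint_inner_left, W.adjoint_pow, W.pow_adj_apply]

lemma norm_map_pow (p : ℕ) (x : K) : ‖(W.V ^ p) x‖ = ‖x‖ := by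
  rw [@norm_eq_sqrt_re_inner ℂ _ _ _ _ ((W.V ^ p) x), W.inner_map_pow, ← @norm_eq_sqrt_re_inner ℂ]

lemma inner_pow_left (p : ℕ) (x y : K) : ⟪(W.V ^ p) x, y⟫ = ⟪x, ((adjoint W.V) ^ p) y⟫ := by
  rw [← W.adjoint_pow, adjoint_inner_right]

lemma inner_pow_right (p : ℕ) (x y : K) : ⟪x, (W.V ^ p) y⟫ = ⟪((adjoint W.V) ^ p) x, y⟫ := by
  rw [← W.adjoint_pow, adjoint_inner_left]

lemma norm_adj_pow_apply_le (p : ℕ) (x : K) : ‖((adjoint W.V) ^ p) x‖ ≤ ‖x‖ := by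
  induction p with
  | zero => simp
  | succ n ih =>
    rw [pow_succ', mul_apply_eq_comp]
    exact le_trans (W.norm_adj_apply_le _) ih

/-- The extension space: sequences `f` with `f n = V* (f (n+1))` and uniformly
bounded norms. -/
@[ext]
structure E (W : IsomOp K) : Type u where
  f : ℕ → K
  rel' : ∀ n, f n = adjoint W.V (f (n + 1))
  bdd' : ∃ C, ∀ n, ‖f n‖ ≤ C

variable {W}

lemma E.ext'' {a b : W.E} (h : ∀ n, a.f n = b.f n) : a = b := E.ext (funext h)

instance : Zero W.E := ⟨⟨fun _ => 0, fun n => by simp, 0, fun n => by simp⟩⟩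
instance : Add W.E :=
  ⟨fun a b => ⟨fun n => a.f n + b.f n,
    fun n => by rw [a.rel' n, b.rel' n, map_add],
    a.bdd'.elim fun C hC => b.bdd'.elim fun D hD =>
      ⟨C + D, fun n => (norm_add_le _ _).trans (add_le_add (hC n) (hD n))⟩⟩⟩
instance : Neg W.E :=
  ⟨fun a => ⟨fun n => -a.f n, fun n => by rw [a.rel' n, map_neg],
    a.bdd'.elim fun C hC => ⟨C, fun n => by rw [norm_neg]; exact hC n⟩⟩⟩
instance : SMul ℂ W.E :=
  ⟨fun c a => ⟨fun n => c • a.f n, fun n => by rw [a.rel' n, map_smul],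
    a.bdd'.elim fun C hC => ⟨‖c‖ * C, fun n => by
      rw [norm_smul]; exact mul_le_mul_of_nonneg_left (hC n) (norm_nonneg c)⟩⟩⟩

lemma coe_zero (n : ℕ) : (0 : W.E).f n = 0 := rfl
lemma coe_add (a b : W.E) (n : ℕ) : (a + b).f n = a.f n + b.f n := rfl
lemma coe_neg (a : W.E) (n : ℕ) : (-a).f n = -a.f n := rfl
lemma coe_smul (c : ℂ) (a : W.E) (n : ℕ) : (c • a).f n = c • a.f n := rfl

instance : AddCommGroup W.E where
  add_assoc a b c := E.ext'' fun n => add_assoc _ _ _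
  zero_add a := E.ext'' fun n => zero_add _
  add_zero a := E.ext'' fun n => add_zero _
  neg_add_cancel a := E.ext'' fun n => neg_add_cancel _
  add_comm a b := E.ext'' fun n => add_comm _ _
  nsmul := nsmulRec
  zsmul := zsmulRec

instance : Module ℂ W.E where
  one_smul a := E.ext'' fun n => one_smul _ _
  mul_smul c d a := E.ext'' fun n => mul_smul _ _ _
  smul_zero c := E.ext'' fun n => smul_zero _
  smul_add c a b := E.ext'' fun n => smul_add _ _ _
  add_smul c d a := E.ext'' fun n => add_smul _ _ _
  zero_smul a := E.ext'' fun n => zero_smul _ _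

lemma coe_sub (a b : W.E) (n : ℕ) : (a - b).f n = a.f n - b.f n := by
  rw [sub_eq_add_neg, coe_add, coe_neg, sub_eq_add_neg]

lemma rel (f : W.E) (n : ℕ) : f.f n = adjoint W.V (f.f (n + 1)) := f.rel' n

lemma rel_pow (f : W.E) (n p : ℕ) : f.f n = ((adjoint W.V) ^ p) (f.f (n + p)) := by
  induction p with
  | zero => simp
  | succ q ih =>
    rw [ih, pow_succ, mul_apply_eq_comp, ← Nat.add_assoc, ← rel f (n + q)]

lemma bddAbove_norm (f : W.E) : BddAbove (Set.range fun n => ‖f.f n‖) := by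
  obtain ⟨C, hC⟩ := f.bdd'
  exact ⟨C, by rintro y ⟨n, rfl⟩; exact hC n⟩

lemma norm_mono (f : W.E) : Monotone fun n => ‖f.f n‖ := by
  apply monotone_nat_of_le_succ
  intro n
  rw [rel f n]
  exact W.norm_adj_apply_le _


/-- The coordinatewise inner products. -/
def cseq (f g : W.E) (n : ℕ) : ℂ := ⟪f.f n, g.f n⟫

lemma cseq_sub_eq (f g : W.E) {n m : ℕ} (h : n ≤ m) :
    ‖cseq f g m - cseq f g n‖ ≤
      ((‖f.f m‖ ^ 2 - ‖f.f n‖ ^ 2) + (‖g.f m‖ ^ 2 - ‖g.f n‖ ^ 2)) / 2 := by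
  set p := m - n with hp
  have hm : m = n + p := by omega
  set a := f.f m with ha
  set b := g.f m with hb
  have hfa : f.f n = ((adjoint W.V) ^ p) a := by rw [ha, hm]; exact rel_pow f n p
  have hgb : g.f n = ((adjoint W.V) ^ p) b := by rw [hb, hm]; exact rel_pow g n p
  set a' := (W.V ^ p) (((adjoint W.V) ^ p) a) with ha'
  set b' := (W.V ^ p) (((adjoint W.V) ^ p) b) with hb'
  have h1 : ⟪a', b⟫ = cseq f g n := by
    rw [ha', W.inner_pow_left, cseq, hfa, hgb]
  have h2 : ⟪a, b'⟫ = cseq f g n := by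
    rw [hb', W.inner_pow_right, cseq, hfa, hgb]
  have h3 : ⟪a', b'⟫ = cseq f g n := by
    rw [ha', hb', W.inner_map_pow, cseq, hfa, hgb]
  have h4 : ⟪a - a', b - b'⟫ = cseq f g m - cseq f g n := by
    rw [inner_sub_left, inner_sub_right, inner_sub_right, h1, h2, h3]
    have : ⟪a, b⟫ = cseq f g m := rfl
    rw [this]; ring
  have h5 : ⟪a', a⟫ = cseq f f n := by rw [ha', W.inner_pow_left, cseq, hfa]
  have h6 : ⟪a, a'⟫ = cseq f f n := by rw [ha', W.inner_pow_right, cseq, hfa]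
  have h7 : ⟪a', a'⟫ = cseq f f n := by rw [ha', W.inner_map_pow, cseq, hfa]
  have hna : ‖a - a'‖ ^ 2 = ‖f.f m‖ ^ 2 - ‖f.f n‖ ^ 2 := by
    rw [← @inner_self_eq_norm_sq ℂ, inner_sub_left, inner_sub_right, inner_sub_right,
      h5, h6, h7]
    have e1 : RCLike.re (⟪a, a⟫ - cseq f f n) = ‖f.f m‖ ^ 2 - ‖f.f n‖ ^ 2 := by
      rw [map_sub, @inner_self_eq_norm_sq ℂ]
      congr 1
      exact @inner_self_eq_norm_sq ℂ _ _ _ _ (f.f n)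
    rw [← e1]; congr 1; ring
  have h5' : ⟪b', b⟫ = cseq g g n := by rw [hb', W.inner_pow_left, cseq, hgb]
  have h6' : ⟪b, b'⟫ = cseq g g n := by rw [hb', W.inner_pow_right, cseq, hgb]
  have h7' : ⟪b', b'⟫ = cseq g g n := by rw [hb', W.inner_map_pow, cseq, hgb]
  have hnb : ‖b - b'‖ ^ 2 = ‖g.f m‖ ^ 2 - ‖g.f n‖ ^ 2 := by
    rw [← @inner_self_eq_norm_sq ℂ, inner_sub_left, inner_sub_right, inner_sub_right,
      h5', h6', h7']
    have e1 : RCLike.re (⟪b, b⟫ - cseq g g n) = ‖g.f m‖ ^ 2 - ‖g.f n‖ ^ 2 := by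
      rw [map_sub, @inner_self_eq_norm_sq ℂ]
      congr 1
      exact @inner_self_eq_norm_sq ℂ _ _ _ _ (g.f n)
    rw [← e1]; congr 1; ring
  rw [← h4]
  calc ‖⟪a - a', b - b'⟫‖ ≤ ‖a - a'‖ * ‖b - b'‖ := norm_inner_le_norm _ _
    _ ≤ (‖a - a'‖ ^ 2 + ‖b - b'‖ ^ 2) / 2 := by nlinarith [sq_nonneg (‖a - a'‖ - ‖b - b'‖)]
    _ = _ := by rw [hna, hnb]

lemma cauchy_dseq (f g : W.E) :
    CauchySeq fun n => ((‖f.f n‖ ^ 2 + ‖g.f n‖ ^ 2) / 2 : ℝ) := by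
  have hmono : Monotone fun n => ((‖f.f n‖ ^ 2 + ‖g.f n‖ ^ 2) / 2 : ℝ) := by
    intro n m h
    have h1 := norm_mono f h
    have h2 := norm_mono g h
    have := norm_nonneg (f.f n)
    have := norm_nonneg (g.f n)
    simp only
    nlinarith
  have hbdd : BddAbove (Set.range fun n => ((‖f.f n‖ ^ 2 + ‖g.f n‖ ^ 2) / 2 : ℝ)) := by
    obtain ⟨C, hC⟩ := bddAbove_norm f
    obtain ⟨D, hD⟩ := bddAbove_norm g
    refine ⟨(C ^ 2 + D ^ 2) / 2, ?_⟩
    rintro y ⟨n, rfl⟩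
    have h1 : ‖f.f n‖ ≤ C := hC ⟨n, rfl⟩
    have h2 : ‖g.f n‖ ≤ D := hD ⟨n, rfl⟩
    have := norm_nonneg (f.f n)
    have := norm_nonneg (g.f n)
    simp only
    nlinarith
  exact (tendsto_atTop_ciSup hmono hbdd).cauchySeq

lemma cauchy_cseq (f g : W.E) : CauchySeq (cseq f g) := by
  set d := fun n => ((‖f.f n‖ ^ 2 + ‖g.f n‖ ^ 2) / 2 : ℝ) with hd
  have hdc : CauchySeq d := cauchy_dseq f g
  rw [Metric.cauchySeq_iff] at hdc ⊢
  intro ε hε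
  obtain ⟨N, hN⟩ := hdc ε hε
  refine ⟨N, fun m hm n hn => ?_⟩
  rcases le_total n m with h | h
  · calc dist (cseq f g m) (cseq f g n) = ‖cseq f g m - cseq f g n‖ := dist_eq_norm _ _
      _ ≤ d m - d n := by
          have := cseq_sub_eq f g h
          rw [hd]; simp only; linarith [this]
      _ ≤ |d m - d n| := le_abs_self _
      _ < ε := by rw [← Real.dist_eq]; exact hN m hm n hn
  · calc dist (cseq f g m) (cseq f g n) = ‖cseq f g n - cseq f g m‖ := by
          rw [dist_eq_norm, ← norm_neg]; congr 1; ring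
      _ ≤ d n - d m := by
          have := cseq_sub_eq f g h
          rw [hd]; simp only; linarith [this]
      _ ≤ |d n - d m| := le_abs_self _
      _ < ε := by rw [← Real.dist_eq]; exact hN n hn m hm

/-- The inner product on the extension space. -/
def innerE (f g : W.E) : ℂ := limUnder atTop (cseq f g)

lemma tendsto_cseq (f g : W.E) : Tendsto (cseq f g) atTop (𝓝 (innerE f g)) :=
  (cauchy_cseq f g).tendsto_limUnder

lemma innerE_conj_symm (x y : W.E) : (starRingEnd ℂ) (innerE y x) = innerE x y := by
  refine tendsto_nhds_unique ?_ (tendsto_cseq x y)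
  have h1 : ∀ n, (starRingEnd ℂ) (cseq y x n) = cseq x y n := fun n => inner_conj_symm _ _
  have h2 : Tendsto (fun n => (starRingEnd ℂ) (cseq y x n)) atTop
      (𝓝 ((starRingEnd ℂ) (innerE y x))) :=
    (Complex.continuous_conj.tendsto _).comp (tendsto_cseq y x)
  exact h2.congr h1

lemma innerE_self_re (x : W.E) :
    Tendsto (fun n => RCLike.re (cseq x x n)) atTop (𝓝 (RCLike.re (innerE x x))) :=
  ((RCLike.continuous_re).tendsto _).comp (tendsto_cseq x x)

lemma cseq_self_re (x : W.E) (k : ℕ) : RCLike.re (cseq x x k) = ‖x.f k‖ ^ 2 :=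
  @inner_self_eq_norm_sq ℂ _ _ _ _ (x.f k)

lemma innerE_nonneg_re (x : W.E) : 0 ≤ RCLike.re (innerE x x) :=
  ge_of_tendsto (innerE_self_re x) (Eventually.of_forall fun n => inner_self_nonneg)

lemma innerE_add_left (x y z : W.E) : innerE (x + y) z = innerE x z + innerE y z := by
  refine tendsto_nhds_unique (tendsto_cseq (x + y) z) ?_
  have h1 : ∀ n, cseq x z n + cseq y z n = cseq (x + y) z n := fun n => by
    rw [cseq, cseq, cseq, coe_add, inner_add_left]
  exact ((tendsto_cseq x z).add (tendsto_cseq y z)).congr h1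

lemma innerE_smul_left (x y : W.E) (r : ℂ) :
    innerE (r • x) y = (starRingEnd ℂ) r * innerE x y := by
  refine tendsto_nhds_unique (tendsto_cseq (r • x) y) ?_
  have h1 : ∀ n, (starRingEnd ℂ) r * cseq x y n = cseq (r • x) y n := fun n => by
    rw [cseq, cseq, coe_smul, inner_smul_left]
  exact ((tendsto_cseq x y).const_mul _).congr h1

lemma cseq_self_mono (x : W.E) : Monotone fun n => RCLike.re (cseq x x n) := by
  intro n m hnm
  simp only [cseq_self_re]
  have := norm_mono x hnm
  have := norm_nonneg (x.f n)
  nlinarith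

lemma innerE_definite (x : W.E) (hx : innerE x x = 0) : x = 0 := by
  have h : Tendsto (fun n => RCLike.re (cseq x x n)) atTop (𝓝 (0 : ℝ)) := by
    have := innerE_self_re x
    rw [hx] at this
    simpa using this
  have hle : ∀ n, RCLike.re (cseq x x n) ≤ 0 := fun n => (cseq_self_mono x).ge_of_tendsto h n
  have hz : ∀ n, x.f n = 0 := by
    intro n
    have h1 := cseq_self_re x n
    have h2 := hle n
    rw [h1] at h2
    have hn := norm_nonneg (x.f n)
    have : ‖x.f n‖ = 0 := by nlinarith
    exact norm_eq_zero.mp this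
  exact E.ext'' hz

variable (W) in
instance coreE : InnerProductSpace.Core ℂ W.E :=
  { inner := innerE
    conj_inner_symm := innerE_conj_symm
    re_inner_nonneg := innerE_nonneg_re
    add_left := innerE_add_left
    smul_left := innerE_smul_left
    definite := innerE_definite }

variable (W) in
instance : NormedAddCommGroup W.E :=
  @InnerProductSpace.Core.toNormedAddCommGroup ℂ W.E _ _ _ (coreE W)

variable (W) in
instance : InnerProductSpace ℂ W.E := InnerProductSpace.ofCore (coreE W).toCore

lemma innerE_eq (f g : W.E) : ⟪f, g⟫ = innerE f g := rfl

lemma tendsto_normE (f : W.E) : Tendsto (fun n => ‖f.f n‖) atTop (𝓝 ‖f‖) := by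
  have h : Tendsto (fun n => RCLike.re (cseq f f n)) atTop (𝓝 (RCLike.re ⟪f, f⟫)) :=
    ((RCLike.continuous_re).tendsto _).comp (tendsto_cseq f f)
  have h2 : Tendsto (fun n => Real.sqrt (RCLike.re (cseq f f n))) atTop
      (𝓝 (Real.sqrt (RCLike.re ⟪f, f⟫))) := (Real.continuous_sqrt.tendsto _).comp h
  rw [← @norm_eq_sqrt_re_inner ℂ] at h2
  refine h2.congr fun n => ?_
  rw [show RCLike.re (cseq f f n) = ‖f.f n‖ ^ 2 from
    @inner_self_eq_norm_sq ℂ _ _ _ _ (f.f n)]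
  exact Real.sqrt_sq (norm_nonneg _)

lemma coord_norm_le (f : W.E) (n : ℕ) : ‖f.f n‖ ≤ ‖f‖ :=
  (norm_mono f).ge_of_tendsto (tendsto_normE f) n

/-- Coordinate evaluation as a continuous linear map. -/
def coordL (n : ℕ) : W.E →L[ℂ] K :=
  LinearMap.mkContinuous
    { toFun := fun f => f.f n
      map_add' := fun f g => coe_add f g n
      map_smul' := fun c f => coe_smul c f n } 1
    (fun f => by rw [one_mul]; exact coord_norm_le f n)

lemma coordL_apply (n : ℕ) (f : W.E) : coordL n f = f.f n := rfl

variable (W) in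
instance completeE : CompleteSpace W.E := by
  apply Metric.complete_of_cauchySeq_tendsto
  intro F hF
  -- coordinatewise limits
  have hcoord : ∀ n : ℕ, CauchySeq fun j => (F j).f n := by
    intro n
    have : CauchySeq ((coordL n) ∘ F) := hF.map (coordL n).uniformContinuous
    simpa [Function.comp_def, coordL_apply] using this
  choose L hL using fun n => cauchySeq_tendsto_of_complete (hcoord n)
  -- bound
  obtain ⟨C, hC⟩ := hF.isBounded_range.exists_norm_le
  have hCn : ∀ j, ‖F j‖ ≤ C := fun j => hC _ ⟨j, rfl⟩
  have hLmem1 : ∀ n, L n = adjoint W.V (L (n + 1)) := by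
    intro n
    refine tendsto_nhds_unique (hL n) ?_
    have h1 : Tendsto (fun j => adjoint W.V ((F j).f (n + 1))) atTop
        (𝓝 (adjoint W.V (L (n + 1)))) :=
      ((adjoint W.V).continuous.tendsto _).comp (hL (n + 1))
    refine h1.congr fun j => ?_
    rw [← rel]
  have hLmem2 : ∃ D, ∀ n, ‖L n‖ ≤ D := by
    refine ⟨C, fun n => ?_⟩
    have h1 : Tendsto (fun j => ‖(F j).f n‖) atTop (𝓝 ‖L n‖) :=
      (continuous_norm.tendsto _).comp (hL n)
    refine le_of_tendsto h1 (Eventually.of_forall fun j => ?_)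
    exact (coord_norm_le (F j) n).trans (hCn j)
  set G : W.E := ⟨L, hLmem1, hLmem2⟩ with hG
  refine ⟨G, ?_⟩
  rw [NormedAddCommGroup.tendsto_atTop]
  intro ε hε
  rw [Metric.cauchySeq_iff] at hF
  obtain ⟨N, hN⟩ := hF (ε / 2) (by linarith)
  refine ⟨N, fun j hj => ?_⟩
  have key : ∀ n, ‖(F j - G).f n‖ ≤ ε / 2 := by
    intro n
    have h1 : Tendsto (fun i => ‖(F j).f n - (F i).f n‖) atTop (𝓝 ‖(F j).f n - L n‖) :=
      (continuous_norm.tendsto _).comp (((hL n).const_sub _).congr fun i => rfl)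
    have h2 : ∀ i, i ≥ N → ‖(F j).f n - (F i).f n‖ ≤ ε / 2 := by
      intro i hi
      rw [show (F j).f n - (F i).f n = (F j - F i).f n from (coe_sub _ _ n).symm]
      refine (coord_norm_le (F j - F i) n).trans ?_
      have := hN j hj i hi
      rw [dist_eq_norm] at this
      linarith
    have h4 : ‖(F j).f n - L n‖ ≤ ε / 2 :=
      le_of_tendsto h1 (eventually_atTop.mpr ⟨N, h2⟩)
    rw [coe_sub]
    exact h4
  have h5 : ‖F j - G‖ ≤ ε / 2 :=
    le_of_tendsto (tendsto_normE (F j - G)) (Eventually.of_forall key)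
  linarith

/-! ### The operators -/

variable (W) in
/-- The isometric embedding of `K`, as an element map. -/
def iotaE (k : K) : W.E where
  f := fun n => (W.V ^ n) k
  rel' := fun n => by
    show (W.V ^ n) k = adjoint W.V ((W.V ^ (n + 1)) k)
    rw [pow_succ', mul_apply_eq_comp, adj_apply]
  bdd' := ⟨‖k‖, fun n => le_of_eq (W.norm_map_pow n k)⟩

lemma iotaE_coord (k : K) (n : ℕ) : (W.iotaE k).f n = (W.V ^ n) k := rfl

lemma norm_iotaE (k : K) : ‖W.iotaE k‖ = ‖k‖ := by
  refine tendsto_nhds_unique (tendsto_normE (W.iotaE k)) ?_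
  have h1 : ∀ n, ‖k‖ = ‖(W.iotaE k).f n‖ := fun n => (W.norm_map_pow n k).symm
  exact tendsto_const_nhds.congr h1

variable (W) in
/-- The isometric embedding of `K` into the extension space. -/
def iota : K →ₗᵢ[ℂ] W.E where
  toLinearMap :=
    { toFun := W.iotaE
      map_add' := fun x y => E.ext'' fun n => by
        simp only [iotaE_coord, coe_add, map_add]
      map_smul' := fun c x => E.ext'' fun n => by
        simp only [iotaE_coord, coe_smul, map_smul, RingHom.id_apply] }
  norm_map' := norm_iotaE

lemma iota_apply (k : K) : W.iota k = W.iotaE k := rfl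

variable (W) in
/-- The unitary shift on the extension space. -/
def UL : W.E →L[ℂ] W.E :=
  LinearMap.mkContinuous
    { toFun := fun f =>
        ⟨fun n => f.f (n + 1), fun n => f.rel' (n + 1),
          f.bdd'.elim fun C hC => ⟨C, fun n => hC (n + 1)⟩⟩
      map_add' := fun f g => E.ext'' fun n => rfl
      map_smul' := fun c f => E.ext'' fun n => rfl } 1
    (fun f => by
      rw [one_mul]
      refine le_of_tendsto (tendsto_normE _) (Eventually.of_forall fun n => ?_)
      exact coord_norm_le f (n + 1))

lemma UL_coord (f : W.E) (n : ℕ) : (W.UL f).f n = f.f (n + 1) := rfl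

variable (W) in
/-- The inverse shift. -/
def UinvL : W.E →L[ℂ] W.E :=
  LinearMap.mkContinuous
    { toFun := fun f =>
        ⟨fun n => Nat.casesOn n (adjoint W.V (f.f 0)) fun m => f.f m,
          fun n => by cases n with
            | zero => rfl
            | succ m => exact f.rel' m,
          f.bdd'.elim fun C hC => ⟨C, fun n => by
            cases n with
            | zero => exact (W.norm_adj_apply_le _).trans (hC 0)
            | succ m => exact hC m⟩⟩
      map_add' := fun f g => E.ext'' fun n => by
        cases n with
        | zero => exact map_add _ _ _
        | succ m => rfl
      map_smul' := fun c f => E.ext'' fun n => by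
        cases n with
        | zero => exact map_smul _ _ _
        | succ m => rfl } 1
    (fun f => by
      rw [one_mul]
      refine le_of_tendsto (tendsto_normE _) (Eventually.of_forall fun n => ?_)
      cases n with
      | zero => exact (W.norm_adj_apply_le _).trans (coord_norm_le f 0)
      | succ m => exact coord_norm_le f m)

lemma UinvL_coord_zero (f : W.E) : (W.UinvL f).f 0 = adjoint W.V (f.f 0) := rfl
lemma UinvL_coord_succ (f : W.E) (n : ℕ) : (W.UinvL f).f (n + 1) = f.f n := rfl

lemma UL_UinvL_apply (f : W.E) : W.UL (W.UinvL f) = f := E.ext'' fun n => rfl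

lemma UinvL_UL_apply (f : W.E) : W.UinvL (W.UL f) = f := E.ext'' fun n => by
  cases n with
  | zero =>
    show adjoint W.V ((W.UL f).f 0) = f.f 0
    rw [UL_coord, ← rel]
  | succ m => rfl

lemma UL_mul_UinvL : W.UL * W.UinvL = 1 :=
  ContinuousLinearMap.ext fun f => UL_UinvL_apply f

lemma UinvL_mul_UL : W.UinvL * W.UL = 1 :=
  ContinuousLinearMap.ext fun f => UinvL_UL_apply f

lemma adjoint_UL : adjoint W.UL = W.UinvL := by
  symm
  rw [eq_adjoint_iff]
  intro x y
  refine tendsto_nhds_unique ?_ (tendsto_cseq x (W.UL y))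
  have h1 : Tendsto (fun n => cseq (W.UinvL x) y (n + 1)) atTop
      (𝓝 (innerE (W.UinvL x) y)) :=
    (tendsto_cseq (W.UinvL x) y).comp (tendsto_add_atTop_nat 1)
  have h2 : ∀ n, cseq (W.UinvL x) y (n + 1) = cseq x (W.UL y) n := fun n => by
    rw [cseq, cseq, UinvL_coord_succ, UL_coord]
  exact h1.congr h2

/-! ### The dense family `ee` -/

variable (W) in
/-- The element `U⁻ᵐ (ι k)` of the extension space, written explicitly. -/
def ee (m : ℕ) (k : K) : W.E where
  f := fun n => if m ≤ n then (W.V ^ (n - m)) k else ((adjoint W.V) ^ (m - n)) k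
  rel' := fun n => by
    show (if m ≤ n then (W.V ^ (n - m)) k else ((adjoint W.V) ^ (m - n)) k) =
      adjoint W.V (if m ≤ n + 1 then (W.V ^ (n + 1 - m)) k
        else ((adjoint W.V) ^ (m - (n + 1))) k)
    rcases le_or_gt m n with h | h
    · rw [if_pos h, if_pos (h.trans (Nat.le_succ n)),
        show n + 1 - m = (n - m) + 1 from by omega, pow_succ', mul_apply_eq_comp, adj_apply]
    · rw [if_neg (not_le.mpr h)]
      rcases eq_or_lt_of_le (Nat.succ_le_of_lt h) with h1 | h1
      · subst h1
        simp
      · rw [if_neg (by omega), show m - n = (m - (n + 1)) + 1 from by omega,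
          pow_succ', mul_apply_eq_comp]
  bdd' := ⟨‖k‖, fun n => by
    show ‖if m ≤ n then (W.V ^ (n - m)) k else ((adjoint W.V) ^ (m - n)) k‖ ≤ ‖k‖
    rcases le_or_gt m n with h | h
    · rw [if_pos h, W.norm_map_pow]
    · rw [if_neg (not_le.mpr h)]
      exact W.norm_adj_pow_apply_le _ _⟩

lemma ee_coord_ge {m n : ℕ} (h : m ≤ n) (k : K) : (W.ee m k).f n = (W.V ^ (n - m)) k :=
  if_pos h

lemma ee_coord_self (m : ℕ) (k : K) : (W.ee m k).f m = k := by
  rw [ee_coord_ge le_rfl, Nat.sub_self, pow_zero, one_apply_eq_self]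

lemma norm_ee (m : ℕ) (k : K) : ‖W.ee m k‖ = ‖k‖ := by
  refine tendsto_nhds_unique (tendsto_normE (W.ee m k)) ?_
  refine Tendsto.congr' ?_ (tendsto_const_nhds (x := ‖k‖))
  filter_upwards [eventually_ge_atTop m] with n hn
  rw [ee_coord_ge hn, W.norm_map_pow]

lemma ee_add (m : ℕ) (k k' : K) : W.ee m (k + k') = W.ee m k + W.ee m k' :=
  E.ext'' fun n => by
    simp only [ee, coe_add]
    split <;> rw [map_add]

lemma ee_sub (m : ℕ) (k k' : K) : W.ee m (k - k') = W.ee m k - W.ee m k' :=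
  E.ext'' fun n => by
    simp only [ee, coe_sub]
    split <;> rw [map_sub]

lemma ee_smul (m : ℕ) (c : ℂ) (k : K) : W.ee m (c • k) = c • W.ee m k :=
  E.ext'' fun n => by
    simp only [ee, coe_smul]
    split <;> rw [map_smul]

lemma ee_zero_eq_iotaE (k : K) : W.ee 0 k = W.iotaE k :=
  E.ext'' fun n => by
    rw [iotaE_coord, ee_coord_ge (Nat.zero_le n), Nat.sub_zero]

lemma ee_succ_V (m : ℕ) (k : K) : W.ee (m + 1) (W.V k) = W.ee m k := by
  refine E.ext'' fun n => ?_
  rcases le_or_gt (m + 1) n with h | h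
  · rw [ee_coord_ge h, ee_coord_ge (by omega), show n - m = (n - (m + 1)) + 1 from by omega,
      pow_succ, mul_apply_eq_comp]
  · have h2 : ¬ (m + 1 ≤ n) := by omega
    show (W.ee (m+1) (W.V k)).f n = (W.ee m k).f n
    rw [show (W.ee (m+1) (W.V k)).f n = ((adjoint W.V) ^ (m + 1 - n)) (W.V k) from
      if_neg h2, show m + 1 - n = (m - n) + 1 from by omega, pow_succ, mul_apply_eq_comp, adj_apply]
    rcases le_or_gt m n with h3 | h3
    · have : m = n := by omega
      subst this
      rw [ee_coord_self, Nat.sub_self, pow_zero, one_apply_eq_self]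
    · rw [show (W.ee m k).f n = ((adjoint W.V) ^ (m - n)) k from if_neg (not_le.mpr h3)]

lemma ee_pow_V (p m : ℕ) (k : K) : W.ee (m + p) ((W.V ^ p) k) = W.ee m k := by
  induction p with
  | zero => simp
  | succ q ih =>
    rw [show m + (q + 1) = (m + q) + 1 from rfl, pow_succ', mul_apply_eq_comp, ee_succ_V, ih]

lemma UL_ee (m : ℕ) (k : K) : W.UL (W.ee m k) = W.ee m (W.V k) := by
  refine E.ext'' fun n => ?_
  rw [UL_coord]
  rcases le_or_gt m n with h | h
  · rw [ee_coord_ge (h.trans (Nat.le_succ n)), ee_coord_ge h,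
      show n + 1 - m = (n - m) + 1 from by omega, pow_succ, mul_apply_eq_comp]
  · rcases eq_or_lt_of_le (Nat.succ_le_of_lt h) with h1 | h1
    · subst h1
      rw [ee_coord_self, show (W.ee (n+1) (W.V k)).f n = ((adjoint W.V) ^ (n + 1 - n)) (W.V k)
        from if_neg (by omega), show n + 1 - n = 1 from by omega, pow_one, adj_apply]
    · rw [show (W.ee m k).f (n+1) = ((adjoint W.V) ^ (m - (n+1))) k from if_neg (by omega),
        show (W.ee m (W.V k)).f n = ((adjoint W.V) ^ (m - n)) (W.V k) from if_neg (by omega),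
        show m - n = (m - (n+1)) + 1 from by omega, pow_succ, mul_apply_eq_comp, adj_apply]

lemma UinvL_ee (m : ℕ) (k : K) : W.UinvL (W.ee m k) = W.ee (m + 1) k := by
  conv_lhs => rw [← ee_succ_V m k, ← UL_ee]
  rw [UinvL_UL_apply]

lemma ee_eq_UinvL_pow (m : ℕ) (k : K) : W.ee m k = (W.UinvL ^ m) (W.iotaE k) := by
  induction m with
  | zero => rw [pow_zero, one_apply_eq_self, ee_zero_eq_iotaE]
  | succ q ih => rw [← UinvL_ee, ih, pow_succ', mul_apply_eq_comp]

lemma inner_iotaE_ee (x : K) (m : ℕ) (k : K) :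
    ⟪W.iotaE x, W.ee m k⟫ = ⟪(W.V ^ m) x, k⟫ := by
  rw [innerE_eq]
  refine tendsto_nhds_unique (tendsto_cseq _ _) ?_
  refine Tendsto.congr' ?_ (tendsto_const_nhds (x := ⟪(W.V ^ m) x, k⟫))
  filter_upwards [eventually_ge_atTop m] with n hn
  rw [cseq, iotaE_coord, ee_coord_ge hn,
    show (W.V ^ n) x = (W.V ^ (n - m)) ((W.V ^ m) x) from by
      rw [← mul_apply_eq_comp, ← pow_add]; congr 2; omega,
    W.inner_map_pow]

/-! ### Density of the family `ee` -/

lemma norm_sub_ee_sq (f : W.E) (m : ℕ) :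
    ‖f - W.ee m (f.f m)‖ ^ 2 = ‖f‖ ^ 2 - ‖f.f m‖ ^ 2 := by
  set z := f - W.ee m (f.f m) with hz
  have h1 : Tendsto (fun n => RCLike.re (cseq z z n)) atTop (𝓝 (RCLike.re (innerE z z))) :=
    innerE_self_re z
  have hsq : Tendsto (fun n => ‖f.f n‖ ^ 2) atTop (𝓝 (‖f‖ ^ 2)) := by
    have := (tendsto_normE f).mul (tendsto_normE f)
    simpa [pow_two] using this
  have h2 : Tendsto (fun n => ‖f.f n‖ ^ 2 - ‖f.f m‖ ^ 2) atTop (𝓝 (‖f‖ ^ 2 - ‖f.f m‖ ^ 2)) :=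
    hsq.sub_const (‖f.f m‖ ^ 2)
  have h3 : Tendsto (fun n => RCLike.re (cseq z z n)) atTop (𝓝 (‖f‖ ^ 2 - ‖f.f m‖ ^ 2)) := by
    refine Tendsto.congr' ?_ h2
    filter_upwards [eventually_ge_atTop m] with n hn
    have hco : z.f n = f.f n - (W.V ^ (n - m)) (f.f m) := by
      rw [hz, coe_sub, ee_coord_ge hn]
    rw [cseq_self_re, hco]
    have hcc : ((adjoint W.V) ^ (n - m)) (f.f n) = f.f m := by
      have h5 := rel_pow f m (n - m)
      rw [show m + (n - m) = n from by omega] at h5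
      exact h5.symm
    have hre : RCLike.re ⟪f.f n, (W.V ^ (n - m)) (f.f m)⟫ = ‖f.f m‖ ^ 2 := by
      rw [W.inner_pow_right, hcc]
      exact @inner_self_eq_norm_sq ℂ _ _ _ _ (f.f m)
    rw [@norm_sub_sq ℂ, hre, W.norm_map_pow]
    ring
  have h4 : RCLike.re (innerE z z) = ‖f‖ ^ 2 - ‖f.f m‖ ^ 2 := tendsto_nhds_unique h1 h3
  rw [← @inner_self_eq_norm_sq ℂ _ _ _ _ z, innerE_eq, h4]

lemma tendsto_ee_self (f : W.E) : Tendsto (fun m => W.ee m (f.f m)) atTop (𝓝 f) := by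
  rw [tendsto_iff_norm_sub_tendsto_zero]
  have h1 : ∀ m, ‖W.ee m (f.f m) - f‖ = Real.sqrt (‖f‖ ^ 2 - ‖f.f m‖ ^ 2) := fun m => by
    rw [norm_sub_rev, ← norm_sub_ee_sq f m, Real.sqrt_sq (norm_nonneg _)]
  have h2 : Tendsto (fun m => Real.sqrt (‖f‖ ^ 2 - ‖f.f m‖ ^ 2)) atTop (𝓝 (0 : ℝ)) := by
    have h3 : Tendsto (fun m => ‖f‖ ^ 2 - ‖f.f m‖ ^ 2) atTop (𝓝 (0 : ℝ)) := by
      have := (tendsto_const_nhds (x := ‖f‖ ^ 2)).sub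
        ((tendsto_normE f).mul (tendsto_normE f))
      rw [show ‖f‖ ^ 2 - ‖f‖ * ‖f‖ = 0 from by ring] at this
      refine this.congr fun n => ?_
      ring_nf
    have := (Real.continuous_sqrt.tendsto 0).comp h3
    simpa [Function.comp_def] using this
  exact (h2.congr fun m => (h1 m).symm)

lemma ext_ee {F G : W.E →L[ℂ] W.E} (h : ∀ m k, F (W.ee m k) = G (W.ee m k)) : F = G := by
  refine ContinuousLinearMap.ext fun f => ?_
  have h1 : Tendsto (fun m => F (W.ee m (f.f m))) atTop (𝓝 (F f)) :=
    (F.continuous.tendsto f).comp (tendsto_ee_self f)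
  have h2 : Tendsto (fun m => G (W.ee m (f.f m))) atTop (𝓝 (G f)) :=
    (G.continuous.tendsto f).comp (tendsto_ee_self f)
  exact tendsto_nhds_unique (h1.congr fun m => h m _) h2

lemma sep_ee {x y : W.E} (h : ∀ m k, ⟪x, W.ee m k⟫ = ⟪y, W.ee m k⟫) : x = y := by
  have hz : ∀ m k, ⟪x - y, W.ee m k⟫ = (0 : ℂ) := fun m k => by
    rw [inner_sub_left, h, sub_self]
  have h1 : Tendsto (fun m => ⟪x - y, W.ee m ((x - y).f m)⟫) atTop (𝓝 ⟪x - y, x - y⟫) :=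
    Tendsto.inner tendsto_const_nhds (tendsto_ee_self (x - y))
  have h2 : ⟪x - y, x - y⟫ = (0 : ℂ) :=
    (tendsto_nhds_unique ((tendsto_const_nhds (x := (0 : ℂ))).congr
      fun m => (hz m _).symm) h1).symm
  exact sub_eq_zero.mp (inner_self_eq_zero.mp h2)

/-! ### Extension of a commuting operator -/

section ExtOp

variable (T : K →L[ℂ] K) (hT : T * W.V = W.V * T)
include hT

lemma comm_pow_apply (p : ℕ) (x : K) : T ((W.V ^ p) x) = (W.V ^ p) (T x) := by
  have h2 : T * W.V ^ p = W.V ^ p * T := Commute.pow_right hT p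
  calc T ((W.V ^ p) x) = (T * W.V ^ p) x := rfl
    _ = (W.V ^ p * T) x := by rw [h2]
    _ = (W.V ^ p) (T x) := rfl

lemma Bseq_ee {m m' : ℕ} (h : m ≤ m') (k : K) :
    W.ee m' (T ((W.ee m k).f m')) = W.ee m (T k) := by
  have h2 := ee_pow_V (W := W) (m' - m) m (T k)
  rw [ee_coord_ge h, comm_pow_apply T hT, ← h2]
  congr 2
  omega

lemma norm_Bseq_sub (f : W.E) {m m' : ℕ} (h : m ≤ m') :
    ‖W.ee m' (T (f.f m')) - W.ee m (T (f.f m))‖ ≤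
      ‖T‖ * Real.sqrt (‖f‖ ^ 2 - ‖f.f m‖ ^ 2) := by
  set s := W.ee m (f.f m) with hs
  have h0 : s.f m = f.f m := ee_coord_self m (f.f m)
  have h1 : W.ee m' (T (s.f m')) = W.ee m (T (f.f m)) := Bseq_ee T hT h (f.f m)
  have h2 : W.ee m' (T (f.f m')) - W.ee m (T (f.f m))
      = W.ee m' (T (f.f m' - s.f m')) := by
    rw [map_sub, ee_sub, h1]
  rw [h2, norm_ee]
  calc ‖T (f.f m' - s.f m')‖ ≤ ‖T‖ * ‖f.f m' - s.f m'‖ := le_opNorm _ _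
    _ = ‖T‖ * ‖(f - s).f m'‖ := by rw [coe_sub]
    _ ≤ ‖T‖ * ‖f - s‖ := by
        gcongr
        exact coord_norm_le _ _
    _ = ‖T‖ * Real.sqrt (‖f‖ ^ 2 - ‖f.f m‖ ^ 2) := by
        rw [← norm_sub_ee_sq f m, Real.sqrt_sq (norm_nonneg _)]

lemma cauchy_Bseq (f : W.E) : CauchySeq fun m => W.ee m (T (f.f m)) := by
  rw [Metric.cauchySeq_iff']
  intro ε hε
  have hsq : Tendsto (fun m => ‖f.f m‖ ^ 2) atTop (𝓝 (‖f‖ ^ 2)) := by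
    have := (tendsto_normE f).mul (tendsto_normE f)
    simpa [pow_two] using this
  have h3 : Tendsto (fun m => (‖T‖ + 1) * Real.sqrt (‖f‖ ^ 2 - ‖f.f m‖ ^ 2)) atTop
      (𝓝 (0 : ℝ)) := by
    have h4 : Tendsto (fun m => ‖f‖ ^ 2 - ‖f.f m‖ ^ 2) atTop (𝓝 (0 : ℝ)) := by
      have := (tendsto_const_nhds (x := ‖f‖ ^ 2)).sub hsq
      simpa using this
    have h5 := (Real.continuous_sqrt.tendsto 0).comp h4
    have h6 := h5.const_mul (‖T‖ + 1)
    simpa using h6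
  rw [Metric.tendsto_atTop] at h3
  obtain ⟨N, hN⟩ := h3 ε hε
  refine ⟨N, fun m hm => ?_⟩
  have h7 := hN N le_rfl
  rw [Real.dist_eq, sub_zero] at h7
  have h8 : ‖T‖ * Real.sqrt (‖f‖ ^ 2 - ‖f.f N‖ ^ 2) ≤
      (‖T‖ + 1) * Real.sqrt (‖f‖ ^ 2 - ‖f.f N‖ ^ 2) := by
    have := Real.sqrt_nonneg (‖f‖ ^ 2 - ‖f.f N‖ ^ 2)
    nlinarith
  have h9 := norm_Bseq_sub T hT f hm
  rw [dist_eq_norm]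
  calc ‖W.ee m (T (f.f m)) - W.ee N (T (f.f N))‖
      ≤ ‖T‖ * Real.sqrt (‖f‖ ^ 2 - ‖f.f N‖ ^ 2) := h9
    _ ≤ (‖T‖ + 1) * Real.sqrt (‖f‖ ^ 2 - ‖f.f N‖ ^ 2) := h8
    _ ≤ |(‖T‖ + 1) * Real.sqrt (‖f‖ ^ 2 - ‖f.f N‖ ^ 2)| := le_abs_self _
    _ < ε := h7

variable (W) in
/-- Extension of an operator commuting with `V` to the extension space. -/
def extOp : W.E →L[ℂ] W.E :=
  LinearMap.mkContinuous
    { toFun := fun f => limUnder atTop fun m => W.ee m (T (f.f m))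
      map_add' := fun f g => by
        refine tendsto_nhds_unique (cauchy_Bseq T hT (f + g)).tendsto_limUnder ?_
        have h1 := ((cauchy_Bseq T hT f).tendsto_limUnder).add
          ((cauchy_Bseq T hT g).tendsto_limUnder)
        refine h1.congr fun m => ?_
        rw [← ee_add, ← map_add, ← coe_add]
      map_smul' := fun c f => by
        refine tendsto_nhds_unique (cauchy_Bseq T hT (c • f)).tendsto_limUnder ?_
        have h1 := ((cauchy_Bseq T hT f).tendsto_limUnder).const_smul c
        refine h1.congr fun m => ?_
        rw [← ee_smul, ← map_smul, ← coe_smul] } ‖T‖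
    (fun f => by
      refine le_of_tendsto (((cauchy_Bseq T hT f).tendsto_limUnder).norm)
        (Eventually.of_forall fun m => ?_)
      rw [norm_ee]
      calc ‖T (f.f m)‖ ≤ ‖T‖ * ‖f.f m‖ := le_opNorm _ _
        _ ≤ ‖T‖ * ‖f‖ := by gcongr; exact coord_norm_le _ _)

lemma tendsto_extOp (f : W.E) :
    Tendsto (fun m => W.ee m (T (f.f m))) atTop (𝓝 (W.extOp T hT f)) :=
  (cauchy_Bseq T hT f).tendsto_limUnder

lemma extOp_ee (m : ℕ) (k : K) : W.extOp T hT (W.ee m k) = W.ee m (T k) := by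
  refine tendsto_nhds_unique (tendsto_extOp T hT (W.ee m k)) ?_
  refine Tendsto.congr' ?_ (tendsto_const_nhds (x := W.ee m (T k)))
  filter_upwards [eventually_ge_atTop m] with m' hm'
  exact (Bseq_ee T hT hm' k).symm

lemma extOp_iotaE (k : K) : W.extOp T hT (W.iotaE k) = W.iotaE (T k) := by
  rw [← ee_zero_eq_iotaE, extOp_ee, ee_zero_eq_iotaE]

lemma norm_extOp_le : ‖W.extOp T hT‖ ≤ ‖T‖ :=
  LinearMap.mkContinuous_norm_le _ (norm_nonneg T) _

end ExtOp

end IsomOp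
end TetraAux

set_option maxHeartbeats 1000000 in
open TetraAux TetraAux.IsomOp in
/-- every tetrablock isometry extends to a tetrablock unitary. -/
theorem tetrablockIsometry_extends_to_tetrablockUnitary
    {K : Type u} [NormedAddCommGroup K] [InnerProductSpace ℂ K] [CompleteSpace K]
    (V₁ V₂ V : K →L[ℂ] K) (hV : IsTetrablockIsometry V₁ V₂ V) :
    ∃ (K' : Type u) (_ : NormedAddCommGroup K') (_ : InnerProductSpace ℂ K')
      (_ : CompleteSpace K') (ι : K →ₗᵢ[ℂ] K') (U₁ U₂ U : K' →L[ℂ] K'),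
        Commute U₁ U₂ ∧ Commute U₁ U ∧ Commute U₂ U ∧
        IsStarNormal U₁ ∧ IsStarNormal U₂ ∧ IsStarNormal U ∧
        adjoint U * U = 1 ∧ U * adjoint U = 1 ∧
        ‖U₂‖ ≤ 1 ∧ U₁ = adjoint U₂ * U ∧
        (∀ k : K, U₁ (ι k) = ι (V₁ k)) ∧
        (∀ k : K, U₂ (ι k) = ι (V₂ k)) ∧
        (∀ k : K, U (ι k) = ι (V k)) := by
  obtain ⟨hc12, hc1, hc2, hiso, hn2, h1⟩ := hV
  classical
  let W : IsomOp K := ⟨V, hiso⟩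
  have hc2' : V₂ * W.V = W.V * V₂ := hc2
  have hc1' : V₁ * W.V = W.V * V₁ := hc1
  -- basic facts
  have hUUi : W.UL * W.UinvL = 1 := UL_mul_UinvL
  have hUiU : W.UinvL * W.UL = 1 := UinvL_mul_UL
  have hUadj : adjoint W.UL = W.UinvL := adjoint_UL
  -- commutation of U₂ and U
  have happ2 : ∀ k : K, V₂ (V k) = V (V₂ k) := fun k => by
    have := congrArg (fun (T : K →L[ℂ] K) => T k) hc2
    simpa [mul_apply] using this
  have hU2U : W.extOp V₂ hc2' * W.UL = W.UL * W.extOp V₂ hc2' := by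
    apply ext_ee
    intro m k
    rw [mul_apply_eq_comp, mul_apply_eq_comp, UL_ee, extOp_ee, extOp_ee, UL_ee, happ2]
  -- key adjoint computation
  have hop : ∀ (m : ℕ) (x : K), adjoint V₂ ((W.V ^ m) (V x)) = (W.V ^ m) (V₁ x) := by
    intro m x
    have e2 : W.V ^ m * V = V * W.V ^ m := ((Commute.refl V).pow_left m)
    have e1 : adjoint V₂ * (W.V ^ m * V) = W.V ^ m * V₁ := by
      rw [e2, ← mul_assoc, ← h1]
      exact hc1.pow_right m
    calc adjoint V₂ ((W.V ^ m) (V x)) = (adjoint V₂ * (W.V ^ m * V)) x := rfl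
      _ = (W.V ^ m * V₁) x := by rw [e1]
      _ = (W.V ^ m) (V₁ x) := rfl
  have hkey : ∀ k : K, adjoint (W.extOp V₂ hc2') (W.iotaE (V k)) = W.iotaE (V₁ k) := by
    intro k
    apply sep_ee
    intro m k'
    rw [adjoint_inner_left, extOp_ee, inner_iotaE_ee, inner_iotaE_ee,
      ← adjoint_inner_left, hop]
  -- U extends V on iota
  have hUiota : ∀ k : K, W.UL (W.iotaE k) = W.iotaE (W.V k) := fun k => by
    rw [← ee_zero_eq_iotaE, UL_ee, ee_zero_eq_iotaE]
  -- adjoint U₂ commutes with Ui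
  have cAUinv : adjoint (W.extOp V₂ hc2') * W.UinvL = W.UinvL * adjoint (W.extOp V₂ hc2') := by
    have hstar := congrArg star hU2U
    rw [star_mul, star_mul, star_eq_adjoint, star_eq_adjoint, hUadj] at hstar
    exact hstar.symm
  have cAUinvPow : ∀ m : ℕ, adjoint (W.extOp V₂ hc2') * W.UinvL ^ m
      = W.UinvL ^ m * adjoint (W.extOp V₂ hc2') := fun m => Commute.pow_right cAUinv m
  -- A * U = extOp V₁
  have hU1ext : adjoint (W.extOp V₂ hc2') * W.UL = W.extOp V₁ hc1' := by
    apply ext_ee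
    intro m k
    rw [mul_apply_eq_comp, UL_ee, extOp_ee]
    rw [ee_eq_UinvL_pow m (W.V k), ee_eq_UinvL_pow m (V₁ k)]
    calc adjoint (W.extOp V₂ hc2') ((W.UinvL ^ m) (W.iotaE (W.V k)))
        = (adjoint (W.extOp V₂ hc2') * W.UinvL ^ m) (W.iotaE (W.V k)) := rfl
      _ = (W.UinvL ^ m * adjoint (W.extOp V₂ hc2')) (W.iotaE (W.V k)) := by
          rw [cAUinvPow m]
      _ = (W.UinvL ^ m) (adjoint (W.extOp V₂ hc2') (W.iotaE (W.V k))) := rfl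
      _ = (W.UinvL ^ m) (W.iotaE (V₁ k)) := by rw [hkey]
  -- extOp V₁ commutes with U₂
  have happ12 : ∀ k : K, V₁ (V₂ k) = V₂ (V₁ k) := fun k => by
    have := congrArg (fun (T : K →L[ℂ] K) => T k) hc12
    simpa [mul_apply] using this
  have c12' : W.extOp V₁ hc1' * W.extOp V₂ hc2' = W.extOp V₂ hc2' * W.extOp V₁ hc1' := by
    apply ext_ee
    intro m k
    rw [mul_apply_eq_comp, mul_apply_eq_comp, extOp_ee, extOp_ee, extOp_ee, extOp_ee, happ12]
  have c12 : (adjoint (W.extOp V₂ hc2') * W.UL) * W.extOp V₂ hc2'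
      = W.extOp V₂ hc2' * (adjoint (W.extOp V₂ hc2') * W.UL) := by
    rw [hU1ext]; exact c12'
  -- U₂ is normal
  have cAU2 : adjoint (W.extOp V₂ hc2') * W.extOp V₂ hc2'
      = W.extOp V₂ hc2' * adjoint (W.extOp V₂ hc2') := by
    have e2 : (adjoint (W.extOp V₂ hc2') * W.extOp V₂ hc2') * W.UL
        = (W.extOp V₂ hc2' * adjoint (W.extOp V₂ hc2')) * W.UL := by
      calc (adjoint (W.extOp V₂ hc2') * W.extOp V₂ hc2') * W.UL
          = adjoint (W.extOp V₂ hc2') * (W.extOp V₂ hc2' * W.UL) := by rw [mul_assoc]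
        _ = adjoint (W.extOp V₂ hc2') * (W.UL * W.extOp V₂ hc2') := by rw [hU2U]
        _ = (adjoint (W.extOp V₂ hc2') * W.UL) * W.extOp V₂ hc2' := by rw [mul_assoc]
        _ = W.extOp V₂ hc2' * (adjoint (W.extOp V₂ hc2') * W.UL) := c12
        _ = (W.extOp V₂ hc2' * adjoint (W.extOp V₂ hc2')) * W.UL := by rw [mul_assoc]
    have e3 := congrArg (fun X => X * W.UinvL) e2
    simpa only [mul_assoc, hUUi, mul_one] using e3
  -- A commutes with U
  have cAU : adjoint (W.extOp V₂ hc2') * W.UL = W.UL * adjoint (W.extOp V₂ hc2') := by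
    calc adjoint (W.extOp V₂ hc2') * W.UL
        = 1 * (adjoint (W.extOp V₂ hc2') * W.UL) := by rw [one_mul]
      _ = (W.UL * W.UinvL) * (adjoint (W.extOp V₂ hc2') * W.UL) := by rw [hUUi]
      _ = W.UL * ((W.UinvL * adjoint (W.extOp V₂ hc2')) * W.UL) := by
          simp only [mul_assoc]
      _ = W.UL * ((adjoint (W.extOp V₂ hc2') * W.UinvL) * W.UL) := by rw [cAUinv]
      _ = W.UL * (adjoint (W.extOp V₂ hc2') * (W.UinvL * W.UL)) := by rw [mul_assoc]
      _ = W.UL * (adjoint (W.extOp V₂ hc2') * 1) := by rw [hUiU]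
      _ = W.UL * adjoint (W.extOp V₂ hc2') := by rw [mul_one]
  -- assemble
  refine ⟨W.E, inferInstance, inferInstance, inferInstance, W.iota,
    adjoint (W.extOp V₂ hc2') * W.UL, W.extOp V₂ hc2', W.UL,
    c12, ?_, hU2U, ?_, ?_, ?_, ?_, ?_, (norm_extOp_le _ _).trans hn2, rfl, ?_, ?_, ?_⟩
  · show (adjoint (W.extOp V₂ hc2') * W.UL) * W.UL
      = W.UL * (adjoint (W.extOp V₂ hc2') * W.UL)
    calc (adjoint (W.extOp V₂ hc2') * W.UL) * W.UL
        = (W.UL * adjoint (W.extOp V₂ hc2')) * W.UL := by rw [cAU]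
      _ = W.UL * (adjoint (W.extOp V₂ hc2') * W.UL) := by rw [mul_assoc]
  · -- IsStarNormal U₁
    constructor
    show star (adjoint (W.extOp V₂ hc2') * W.UL) * (adjoint (W.extOp V₂ hc2') * W.UL)
      = (adjoint (W.extOp V₂ hc2') * W.UL) * star (adjoint (W.extOp V₂ hc2') * W.UL)
    have hsA : star (adjoint (W.extOp V₂ hc2')) = W.extOp V₂ hc2' := by
      rw [star_eq_adjoint, adjoint_adjoint]
    have hsU : star W.UL = W.UinvL := by rw [star_eq_adjoint, hUadj]
    rw [star_mul, hsA, hsU]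
    calc (W.UinvL * W.extOp V₂ hc2') * (adjoint (W.extOp V₂ hc2') * W.UL)
        = W.UinvL * ((W.extOp V₂ hc2' * adjoint (W.extOp V₂ hc2')) * W.UL) := by
          simp only [mul_assoc]
      _ = W.UinvL * ((adjoint (W.extOp V₂ hc2') * W.extOp V₂ hc2') * W.UL) := by rw [cAU2]
      _ = W.UinvL * (adjoint (W.extOp V₂ hc2') * (W.extOp V₂ hc2' * W.UL)) := by
          rw [mul_assoc]
      _ = W.UinvL * (adjoint (W.extOp V₂ hc2') * (W.UL * W.extOp V₂ hc2')) := by rw [hU2U]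
      _ = W.UinvL * ((adjoint (W.extOp V₂ hc2') * W.UL) * W.extOp V₂ hc2') := by
          rw [mul_assoc]
      _ = W.UinvL * ((W.UL * adjoint (W.extOp V₂ hc2')) * W.extOp V₂ hc2') := by rw [cAU]
      _ = (W.UinvL * W.UL) * (adjoint (W.extOp V₂ hc2') * W.extOp V₂ hc2') := by
          simp only [mul_assoc]
      _ = adjoint (W.extOp V₂ hc2') * W.extOp V₂ hc2' := by rw [hUiU, one_mul]
      _ = adjoint (W.extOp V₂ hc2') * ((W.UL * W.UinvL) * W.extOp V₂ hc2') := by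
          rw [hUUi, one_mul]
      _ = (adjoint (W.extOp V₂ hc2') * W.UL) * (W.UinvL * W.extOp V₂ hc2') := by
          simp only [mul_assoc]
  · -- IsStarNormal U₂
    constructor
    show star (W.extOp V₂ hc2') * W.extOp V₂ hc2'
      = W.extOp V₂ hc2' * star (W.extOp V₂ hc2')
    rw [star_eq_adjoint]
    exact cAU2
  · -- IsStarNormal U
    constructor
    show star W.UL * W.UL = W.UL * star W.UL
    rw [star_eq_adjoint, hUadj, hUiU, hUUi]
  · rw [hUadj]; exact hUiU
  · rw [hUadj]; exact hUUi
  · intro k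
    show (adjoint (W.extOp V₂ hc2') * W.UL) (W.iota k) = W.iota (V₁ k)
    rw [mul_apply_eq_comp, iota_apply, iota_apply, hUiota, hkey]
  · intro k
    show W.extOp V₂ hc2' (W.iota k) = W.iota (V₂ k)
    rw [iota_apply, iota_apply, extOp_iotaE]
  · intro k
    show W.UL (W.iota k) = W.iota (V k)
    rw [iota_apply, iota_apply, hUiota]
end
end

section
/- Let T be a partial isometry (a contraction with T T* T = T) on a complex Hilbert space H, and let T₁, T₂ be contractions on H. Suppose there exist bounded operators F₁, F₂ on the defect space 𝒟_T such that T₁ − T₂*T = D_T F₁ D_T and T₂ − T₁*T = D_T F₂ D_T. Then the kernel of T is invariant under both T₁ and T₂, i.e. T₁(ker T) ⊆ ker T and T₂(ker T) ⊆ ker T. -/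
/- Common definitions: the tetrablock, tetrablock contractions, defect operators and
defect spaces, fundamental operators, tetrablock isometries and tetrablock-isometric lifts. -/

noncomputable section

open ContinuousLinearMap

universe u

variable {H : Type u} [NormedAddCommGroup H] [InnerProductSpace ℂ H] [CompleteSpace H]

set_option maxHeartbeats 800000 in
set_option synthInstance.maxHeartbeats 400000 in
lemma defect_eq_of_partialIsometry' {H : Type u} [NormedAddCommGroup H]
    [InnerProductSpace ℂ H] [CompleteSpace H]
    (T : H →L[ℂ] H) (hT : ‖T‖ ≤ 1) (hpi : T * adjoint T * T = T) :
    defect T = 1 - adjoint T * T := by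
  have hpos : (0 : H →L[ℂ] H) ≤ 1 - adjoint T * T := by
    rw [sub_nonneg]
    have h1 : (0 : H →L[ℂ] H) ≤ adjoint T * T := by
      rw [← star_eq_adjoint]; exact star_mul_self_nonneg T
    have h2 : ‖adjoint T * T‖ ≤ 1 := by
      rw [← star_eq_adjoint, CStarRing.norm_star_mul_self]
      nlinarith [norm_nonneg T]
    exact (CStarAlgebra.norm_le_one_iff_of_nonneg _ h1).mp h2
  have hsq : (1 - adjoint T * T) ^ 2 = 1 - adjoint T * T := by
    have key : adjoint T * T * (adjoint T * T) = adjoint T * T := by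
      have := congrArg (fun S => adjoint T * S) hpi
      simpa [mul_assoc] using this
    rw [sq, mul_sub, sub_mul, sub_mul, one_mul, mul_one, key]
    abel
  rw [defect]
  conv_lhs => rw [← hsq]
  exact CFC.sqrt_sq _ hpos

lemma defectSpace_le_ker' {H : Type u} [NormedAddCommGroup H]
    [InnerProductSpace ℂ H] [CompleteSpace H]
    (T : H →L[ℂ] H) (hT : ‖T‖ ≤ 1) (hpi : T * adjoint T * T = T) :
    defectSpace T ≤ LinearMap.ker (T : H →ₗ[ℂ] H) := by
  have hTD : T * defect T = 0 := by
    rw [defect_eq_of_partialIsometry' T hT hpi, mul_sub, mul_one, ← mul_assoc, hpi, sub_self]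
  refine Submodule.topologicalClosure_minimal _ ?_ ?_
  · rintro y ⟨h, rfl⟩
    have : T (defect T h) = (T * defect T) h := rfl
    simp [LinearMap.mem_ker, this, hTD]
  · exact ContinuousLinearMap.isClosed_ker T

/-- if `T` is a partial isometry, `T₁, T₂` are contractions, and operators
`F₁, F₂` on `𝒟_T` satisfy `T₁ - T₂*T = D_T F₁ D_T` and `T₂ - T₁*T = D_T F₂ D_T`,
then `ker T` is invariant under both `T₁` and `T₂`. -/
theorem ker_invariant_of_partialIsometry
    (T T₁ T₂ : H →L[ℂ] H) (hT : ‖T‖ ≤ 1) (hpi : T * adjoint T * T = T)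
    (h1 : ‖T₁‖ ≤ 1) (h2 : ‖T₂‖ ≤ 1)
    (F₁ F₂ : defectSpace T →L[ℂ] defectSpace T)
    (hF₁ : T₁ - adjoint T₂ * T = (defectSpace T).subtypeL ∘L F₁ ∘L defectTo T)
    (hF₂ : T₂ - adjoint T₁ * T = (defectSpace T).subtypeL ∘L F₂ ∘L defectTo T) :
    (∀ x ∈ LinearMap.ker (T : H →ₗ[ℂ] H), T₁ x ∈ LinearMap.ker (T : H →ₗ[ℂ] H)) ∧
    (∀ x ∈ LinearMap.ker (T : H →ₗ[ℂ] H), T₂ x ∈ LinearMap.ker (T : H →ₗ[ℂ] H)) := by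
  have hle := defectSpace_le_ker' T hT hpi
  constructor
  · intro x hx
    have hx0 : T x = 0 := hx
    have h := congrArg (fun S : H →L[ℂ] H => S x) hF₁
    simp only [sub_apply, mul_apply_eq_comp, coe_comp', Function.comp_apply, hx0, map_zero,
      sub_zero] at h
    rw [h]
    exact hle (Submodule.coe_mem _)
  · intro x hx
    have hx0 : T x = 0 := hx
    have h := congrArg (fun S : H →L[ℂ] H => S x) hF₂
    simp only [sub_apply, mul_apply_eq_comp, coe_comp', Function.comp_apply, hx0, map_zero,
      sub_zero] at h
    rw [h]
    exact hle (Submodule.coe_mem _)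
end
end
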